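/- arXiv:2007.02390 — 2 statements merged into one kernel-verified Lean document; each statement's English description precedes it below -/
import Mathlib

section
/- Let P' ∈ 𝒫_{k,ε}(G) be a one-way perturbation of P ∈ 𝒫_{k,ε}(G) in which the vertex set V_ij is moved from district P_i to district P_j, where 0 ≤ ε < 1. Let a, b : V → ℝ satisfy 0 ≤ a(v) ≤ b(v) ≤ p(v) and b(v) > 0 for all v, let f(W) = a(W)/b(W), and let α > 0 satisfy α ≤ b(W)/p(W) for each W ∈ {P_i, P'_i, P_j, P'_j}. Then max over all districts m of |f(P_m) − f(P'_m)| ≤ (2ε/(α(1−ε))) · max( |f(V_ij) − f(P_i)| , |f(V_ij) − f(P_j)| ); in particular |f(P_i) − f(P'_i)| ≤ (2ε/(α(1−ε)))·|f(V_ij) − f(P_i)| and |f(P_j) − f(P'_j)| ≤ (2ε/(α(1−ε)))·|f(V_ij) − f(P_j)|. -/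
open scoped Classical

noncomputable section

/-- A districting plan: a partition of the vertices of `G` into `k` nonempty
connected districts, each with population within `ε` of the ideal size. -/
structure DistrictingPlan (V : Type*) [Fintype V] [DecidableEq V] (G : SimpleGraph V)
    (p : V → ℝ) (k : ℕ) (ε : ℝ) where
  part : Fin k → Finset V
  part_nonempty : ∀ m, (part m).Nonempty
  part_disjoint : ∀ m n, m ≠ n → Disjoint (part m) (part n)
  part_covers : ∀ v : V, ∃ m, v ∈ part m
  part_connected : ∀ m, (G.induce ((part m : Finset V) : Set V)).Connected
  balance_low : ∀ m, (1 - ε) * (∑ v, p v) / (k : ℝ) ≤ ∑ v ∈ part m, p v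
  balance_high : ∀ m, ∑ v ∈ part m, p v ≤ (1 + ε) * (∑ v, p v) / (k : ℝ)

/-- The district dual graph of a districting plan: districts are adjacent iff
some edge of `G` joins them. -/
def dualGraph {V : Type*} [Fintype V] [DecidableEq V] {G : SimpleGraph V} {p : V → ℝ}
    {k : ℕ} {ε : ℝ} (P : DistrictingPlan V G p k ε) : SimpleGraph (Fin k) where
  Adj m n := m ≠ n ∧ ∃ u ∈ P.part m, ∃ v ∈ P.part n, G.Adj u v
  symm := by
    constructor
    rintro m n ⟨hmn, u, hu, v, hv, huv⟩
    exact ⟨hmn.symm, v, hv, u, hu, huv.symm⟩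
  loopless := by
    constructor
    intro m h
    exact h.1 rfl

/-- **District vote-share stability under a one-way perturbation**: if `P'` is
a one-way perturbation of `P` moving `Vij` from district `i` to district `j`,
then the change in the ratio function `f = a/b` on every district is bounded by
`(2ε/(α(1-ε))) · max(|f(Vij) - f(P_i)|, |f(Vij) - f(P_j)|)`; in particular the
changes on districts `i` and `j` are bounded by `(2ε/(α(1-ε)))·|f(Vij) - f(P_i)|`
and `(2ε/(α(1-ε)))·|f(Vij) - f(P_j)|` respectively. -/
theorem district_share_stability
    {V : Type*} [Fintype V] [DecidableEq V] (G : SimpleGraph V)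
    (p : V → ℝ) (k : ℕ) (ε : ℝ) (hk : 2 ≤ k) (hε0 : 0 ≤ ε) (hε1 : ε < 1)
    (hG : G.Connected) (hp : ∀ v, 0 ≤ p v)
    (P P' : DistrictingPlan V G p k ε)
    -- the one-way perturbation moving `Vij` from district `i` to district `j`
    (i j : Fin k) (hij : i ≠ j) (Vij : Finset V) (hVne : Vij.Nonempty)
    (hVsub : Vij ⊆ P.part i)
    (hPi' : P'.part i = P.part i \ Vij)
    (hPj' : P'.part j = P.part j ∪ Vij)
    (hother : ∀ m, m ≠ i → m ≠ j → P'.part m = P.part m)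
    -- the data `a`, `b` and the ratio function `f = a/b`
    (a b : V → ℝ) (ha : ∀ v, 0 ≤ a v) (hab : ∀ v, a v ≤ b v) (hbp : ∀ v, b v ≤ p v)
    (hb : ∀ v, 0 < b v)
    (f : Finset V → ℝ)
    (hf : ∀ W : Finset V, f W = (∑ v ∈ W, a v) / (∑ v ∈ W, b v))
    -- `α` is a lower bound on `b(W)/p(W)` over the four affected districts
    (α : ℝ) (hα : 0 < α)
    (hαPi : α ≤ (∑ v ∈ P.part i, b v) / (∑ v ∈ P.part i, p v))
    (hαPi' : α ≤ (∑ v ∈ P'.part i, b v) / (∑ v ∈ P'.part i, p v))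
    (hαPj : α ≤ (∑ v ∈ P.part j, b v) / (∑ v ∈ P.part j, p v))
    (hαPj' : α ≤ (∑ v ∈ P'.part j, b v) / (∑ v ∈ P'.part j, p v)) :
    (∀ m : Fin k, |f (P.part m) - f (P'.part m)|
        ≤ (2 * ε / (α * (1 - ε))) *
            max |f Vij - f (P.part i)| |f Vij - f (P.part j)|) ∧
    |f (P.part i) - f (P'.part i)|
        ≤ (2 * ε / (α * (1 - ε))) * |f Vij - f (P.part i)| ∧
    |f (P.part j) - f (P'.part j)|
        ≤ (2 * ε / (α * (1 - ε))) * |f Vij - f (P.part j)| := by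

  classical
  -- basic positivity
  have hk0 : (0:ℝ) < (k:ℝ) := by exact_mod_cast (by omega : 0 < k)
  have h1ε : (0:ℝ) < 1 - ε := by linarith
  have hKpos : 0 < α * (1 - ε) := mul_pos hα h1ε
  have hKnn : 0 ≤ 2 * ε / (α * (1 - ε)) := div_nonneg (by linarith) hKpos.le
  -- disjointness and sum splits
  have hdisjB : Disjoint (P.part j) Vij :=
    (P.part_disjoint j i hij.symm).mono_right hVsub
  have hsplitA : ∀ g : V → ℝ,
      ∑ v ∈ P.part i, g v = ∑ v ∈ P'.part i, g v + ∑ v ∈ Vij, g v := by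
    intro g; rw [hPi', Finset.sum_sdiff hVsub]
  have hsplitB : ∀ g : V → ℝ,
      ∑ v ∈ P'.part j, g v = ∑ v ∈ P.part j, g v + ∑ v ∈ Vij, g v := by
    intro g; rw [hPj', Finset.sum_union hdisjB]
  -- positivity of b-sums
  have hbpos : ∀ (W : Finset V), W.Nonempty → 0 < ∑ v ∈ W, b v := fun W hW =>
    Finset.sum_pos (fun v _ => hb v) hW
  have hbS : 0 < ∑ v ∈ Vij, b v := hbpos _ hVne
  have hbA' : 0 < ∑ v ∈ P'.part i, b v := hbpos _ (P'.part_nonempty i)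
  have hbB : 0 < ∑ v ∈ P.part j, b v := hbpos _ (P.part_nonempty j)
  have hbB' : 0 < ∑ v ∈ P'.part j, b v := hbpos _ (P'.part_nonempty j)
  -- b ≤ p on sums, p-sums nonneg
  have hbp' : ∀ W : Finset V, ∑ v ∈ W, b v ≤ ∑ v ∈ W, p v := fun W =>
    Finset.sum_le_sum (fun v _ => hbp v)
  have hpnn : ∀ W : Finset V, 0 ≤ ∑ v ∈ W, p v := fun W =>
    Finset.sum_nonneg (fun v _ => hp v)
  have hpS : 0 < ∑ v ∈ Vij, p v := lt_of_lt_of_le hbS (hbp' _)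
  -- total population is positive
  have hpApos : 0 < ∑ v ∈ P.part i, p v := by
    have := hsplitA p
    have := hpnn (P'.part i)
    linarith
  have hpV : 0 < ∑ v, p v := by
    by_contra h
    push_neg at h
    have h1 : (1 + ε) * (∑ v, p v) ≤ 0 :=
      mul_nonpos_of_nonneg_of_nonpos (by linarith) h
    have h2 : (1 + ε) * (∑ v, p v) / (k:ℝ) ≤ 0 :=
      div_nonpos_of_nonpos_of_nonneg h1 hk0.le
    have := P.balance_high i
    linarith
  -- p(Vij) ≤ 2ε p(V)/k
  have hpSle : ∑ v ∈ Vij, p v ≤ 2 * ε * (∑ v, p v) / (k:ℝ) := by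
    have hsp := hsplitA p
    have h1 := P.balance_high i
    have h2 := P'.balance_low i
    have hr : (1 + ε) * (∑ v, p v) / (k:ℝ) - (1 - ε) * (∑ v, p v) / (k:ℝ)
        = 2 * ε * (∑ v, p v) / (k:ℝ) := by ring
    linarith
  have hbSle : ∑ v ∈ Vij, b v ≤ 2 * ε * (∑ v, p v) / (k:ℝ) :=
    le_trans (hbp' _) hpSle
  -- lower bounds on b-sums of the new districts
  have hplow : ∀ (Q : DistrictingPlan V G p k ε) (m : Fin k),
      0 < ∑ v ∈ Q.part m, p v := by
    intro Q m
    have := Q.balance_low m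
    have : 0 < (1 - ε) * (∑ v, p v) / (k:ℝ) :=
      div_pos (mul_pos h1ε hpV) hk0
    linarith [Q.balance_low m]
  have hblow : ∀ (Q : DistrictingPlan V G p k ε) (m : Fin k),
      α ≤ (∑ v ∈ Q.part m, b v) / (∑ v ∈ Q.part m, p v) →
      α * (1 - ε) * (∑ v, p v) / (k:ℝ) ≤ ∑ v ∈ Q.part m, b v := by
    intro Q m hαm
    have hpm := hplow Q m
    have h1 : α * (∑ v ∈ Q.part m, p v) ≤ ∑ v ∈ Q.part m, b v :=
      (le_div_iff₀ hpm).mp hαm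
    have h2 : (1 - ε) * (∑ v, p v) / (k:ℝ) ≤ ∑ v ∈ Q.part m, p v :=
      Q.balance_low m
    calc α * (1 - ε) * (∑ v, p v) / (k:ℝ)
        = α * ((1 - ε) * (∑ v, p v) / (k:ℝ)) := by ring
      _ ≤ α * (∑ v ∈ Q.part m, p v) := by
          exact mul_le_mul_of_nonneg_left h2 hα.le
      _ ≤ ∑ v ∈ Q.part m, b v := h1
  have hbA'low : α * (1 - ε) * (∑ v, p v) / (k:ℝ) ≤ ∑ v ∈ P'.part i, b v :=
    hblow P' i hαPi'
  have hbB'low : α * (1 - ε) * (∑ v, p v) / (k:ℝ) ≤ ∑ v ∈ P'.part j, b v :=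
    hblow P' j hαPj'
  -- coefficient bounds
  have hcoef : ∀ D : ℝ, 0 < D → α * (1 - ε) * (∑ v, p v) / (k:ℝ) ≤ D →
      (∑ v ∈ Vij, b v) / D ≤ 2 * ε / (α * (1 - ε)) := by
    intro D hD hDlow
    rw [div_le_div_iff₀ hD hKpos]
    calc (∑ v ∈ Vij, b v) * (α * (1 - ε))
        ≤ (2 * ε * (∑ v, p v) / (k:ℝ)) * (α * (1 - ε)) :=
          mul_le_mul_of_nonneg_right hbSle hKpos.le
      _ = 2 * ε * (α * (1 - ε) * (∑ v, p v) / (k:ℝ)) := by ring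
      _ ≤ 2 * ε * D := mul_le_mul_of_nonneg_left hDlow (by linarith)
  have hci : (∑ v ∈ Vij, b v) / (∑ v ∈ P'.part i, b v) ≤ 2 * ε / (α * (1 - ε)) :=
    hcoef _ hbA' hbA'low
  have hcj : (∑ v ∈ Vij, b v) / (∑ v ∈ P'.part j, b v) ≤ 2 * ε / (α * (1 - ε)) :=
    hcoef _ hbB' hbB'low
  -- exact identities
  have hidA : f (P.part i) - f (P'.part i)
      = ((∑ v ∈ Vij, b v) / (∑ v ∈ P'.part i, b v)) * (f Vij - f (P.part i)) := by
    simp only [hf]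
    rw [hsplitA a, hsplitA b]
    have h1 := hbA'.ne'
    have h2 := hbS.ne'
    have h3 := (add_pos hbA' hbS).ne'
    field_simp
    ring
  have hidB : f (P'.part j) - f (P.part j)
      = ((∑ v ∈ Vij, b v) / (∑ v ∈ P'.part j, b v)) * (f Vij - f (P.part j)) := by
    simp only [hf]
    rw [hsplitB a, hsplitB b]
    have h1 := hbB.ne'
    have h2 := hbS.ne'
    have h3 : (∑ v ∈ P.part j, b v) + (∑ v ∈ Vij, b v) ≠ 0 := (add_pos hbB hbS).ne'
    field_simp
    ring
  -- the two key estimates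
  have hboundi : |f (P.part i) - f (P'.part i)|
      ≤ 2 * ε / (α * (1 - ε)) * |f Vij - f (P.part i)| := by
    rw [hidA, abs_mul, abs_of_nonneg (div_nonneg hbS.le hbA'.le)]
    exact mul_le_mul_of_nonneg_right hci (abs_nonneg _)
  have hboundj : |f (P.part j) - f (P'.part j)|
      ≤ 2 * ε / (α * (1 - ε)) * |f Vij - f (P.part j)| := by
    rw [abs_sub_comm, hidB, abs_mul, abs_of_nonneg (div_nonneg hbS.le hbB'.le)]
    exact mul_le_mul_of_nonneg_right hcj (abs_nonneg _)
  refine ⟨?_, hboundi, hboundj⟩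
  intro m
  by_cases hmi : m = i
  · subst hmi
    exact le_trans hboundi (mul_le_mul_of_nonneg_left (le_max_left _ _) hKnn)
  · by_cases hmj : m = j
    · subst hmj
      exact le_trans hboundj (mul_le_mul_of_nonneg_left (le_max_right _ _) hKnn)
    · rw [hother m hmi hmj, sub_self, abs_zero]
      exact mul_nonneg hKnn (le_trans (abs_nonneg _) (le_max_left _ _))

end
end

section
/- Let G be a finite simple graph on vertices {w_1,…,w_k} with an injective vertex function F ordered so that F(w_1) < … < F(w_k), and let (b_i, d_i) be the persistence-diagram point contributed by w_i. Suppose there exists a walk in G from w_i to some vertex w with F(w) < F(w_i). Then d_i is finite and d_i = min over all walks γ in G from w_i to a vertex of strictly smaller F-value of ( max over vertices v on γ of F(v) ). In other words, the death value of w_i is the minimax F-value over paths connecting w_i to a vertex less than it, so any path from w_i to a vertex of smaller F-value must pass through a vertex with F-value at least d_i, and some such path achieves maximum exactly d_i. -/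
open scoped Classical

noncomputable section

/-- A point of a degree-0 persistence diagram: a real birth value and a death
value in `EReal` (which may be `⊤`). -/
abbrev PDPoint : Type := ℝ × EReal

/-- The distance between two death values, with `|⊤ - ⊤| = 0` and the distance
from a finite value to `⊤` equal to `⊤`. -/
noncomputable def deathDist (x y : EReal) : EReal :=
  if x = ⊤ ∧ y = ⊤ then 0
  else if x = ⊤ ∨ y = ⊤ then ⊤
  else ((|x.toReal - y.toReal| : ℝ) : EReal)

/-- The ℓ∞ distance between two persistence diagram points. -/
noncomputable def pointDistInf (p q : PDPoint) : EReal :=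
  max ((|p.1 - q.1| : ℝ) : EReal) (deathDist p.2 q.2)

/-- The ℓ∞ distance `(d - b)/2` from a diagram point to the diagonal
(`⊤` for a point with infinite death). -/
noncomputable def diagDistInf (p : PDPoint) : EReal :=
  if p.2 = ⊤ then ⊤ else (((p.2.toReal - p.1) / 2 : ℝ) : EReal)

/-- `M : ι → Option κ` encodes a partial bijection when it is injective on
matched values. -/
def IsPartialMatching {ι κ : Type*} (M : ι → Option κ) : Prop :=
  ∀ i₁ i₂ j, M i₁ = some j → M i₂ = some j → i₁ = i₂

/-- The ∞-cost of a partial matching between two persistence diagrams: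
the supremum of ℓ∞ distances between matched points together with the
diagonal distances of all unmatched points of either diagram. -/
noncomputable def matchingCost {ι κ : Type*} (D₁ : ι → PDPoint) (D₂ : κ → PDPoint)
    (M : ι → Option κ) : EReal :=
  (⨆ i : ι, (M i).elim (diagDistInf (D₁ i)) (fun j => pointDistInf (D₁ i) (D₂ j))) ⊔
  (⨆ j ∈ {j : κ | ∀ i, M i ≠ some j}, diagDistInf (D₂ j))

/-- The bottleneck distance between two persistence diagrams: the infimum of
the ∞-cost over all partial bijections. -/
noncomputable def bottleneckDist {ι κ : Type*} (D₁ : ι → PDPoint) (D₂ : κ → PDPoint) : EReal :=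
  ⨅ M ∈ {M : ι → Option κ | IsPartialMatching M}, matchingCost D₁ D₂ M

/-- `u` and `v` are connected within the sublevel set `{w | F w ≤ t}` of `G`. -/
def sublevelReach {V : Type*} (G : SimpleGraph V) (F : V → ℝ) (t : ℝ) (u v : V) : Prop :=
  ∃ (hu : F u ≤ t) (hv : F v ≤ t),
    (G.induce {w | F w ≤ t}).Reachable ⟨u, hu⟩ ⟨v, hv⟩

/-- The death value of the degree-0 persistence class created by vertex `v` of
the sublevel-set filtration of `G` by `F`: the least threshold `t` at which the
connected component of `v` in the sublevel graph contains a vertex of strictly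
smaller `F`-value (`⊤` if this never happens). -/
noncomputable def deathValue {V : Type*} (G : SimpleGraph V) (F : V → ℝ) (v : V) : EReal :=
  sInf {t : EReal | ∃ s : ℝ, t = (s : EReal) ∧ ∃ u, F u < F v ∧ sublevelReach G F s v u}

/-- The degree-0 persistence diagram of the sublevel-set filtration of `G` by
`F`, as an indexed family of points: vertex `v` contributes the point
`(F v, deathValue G F v)`. -/
noncomputable def persistenceDiagram {V : Type*} (G : SimpleGraph V) (F : V → ℝ) :
    V → PDPoint :=
  fun v => (F v, deathValue G F v)

lemma reach_of_walk' {V : Type*} (G : SimpleGraph V) (s : Set V) {a b : V} (W : G.Walk a b)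
    (h : ∀ x ∈ W.support, x ∈ s) :
    (G.induce s).Reachable ⟨a, h a W.start_mem_support⟩ ⟨b, h b W.end_mem_support⟩ := by
  induction W with
  | nil => exact SimpleGraph.Reachable.refl _
  | @cons u x w hadj p ih =>
    exact (SimpleGraph.Adj.reachable (u := (⟨u, h u (by simp)⟩ : s)) (v := ⟨x, h x (by simp)⟩)
      hadj).trans (ih (fun y hy => h y (by simp [hy])))

lemma walk_of_reach' {V : Type*} (G : SimpleGraph V) (s : Set V) {a b : s}
    (h : (G.induce s).Reachable a b) : ∃ W : G.Walk a.1 b.1, ∀ x ∈ W.support, x ∈ s := by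
  obtain ⟨w⟩ := h
  refine ⟨w.map (SimpleGraph.Embedding.comap (Function.Embedding.subtype _) G).toHom, ?_⟩
  intro x hx
  replace hx : x ∈ w.support.map
      (SimpleGraph.Embedding.comap (Function.Embedding.subtype fun x => x ∈ s) G).toHom := by
    rw [← SimpleGraph.Walk.support_map]; exact hx
  obtain ⟨y, hy, rfl⟩ := List.mem_map.mp hx
  exact y.2

lemma sublevelReach_iff {V : Type*} (G : SimpleGraph V) (F : V → ℝ) (t : ℝ) (u w : V) :
    sublevelReach G F t u w ↔ ∃ W : G.Walk u w, ∀ x ∈ W.support, F x ≤ t := by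
  constructor
  · rintro ⟨hu, hw, hr⟩
    exact walk_of_reach' G {x | F x ≤ t} hr
  · rintro ⟨W, hW⟩
    exact ⟨hW u W.start_mem_support, hW w W.end_mem_support,
      reach_of_walk' G {x | F x ≤ t} W hW⟩

/-- **Minimax characterization of death values**: if some walk joins `v` to a
vertex of strictly smaller `F`-value, then the death value of `v` is finite,
every walk from `v` to a vertex of smaller `F`-value passes through a vertex
with `F`-value at least the death value, and some such walk stays entirely at
or below the death value (so the death value is the minimum over such walks of
the maximum of `F` over the walk). -/
theorem death_value_minimax
    {V : Type*} [Fintype V] (G : SimpleGraph V) (F : V → ℝ)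
    (hF : Function.Injective F) (v : V)
    (hreach : ∃ u, F u < F v ∧ G.Reachable v u) :
    deathValue G F v ≠ ⊤ ∧
    (∀ u, F u < F v → ∀ W : G.Walk v u,
      ∃ x ∈ W.support, deathValue G F v ≤ (F x : EReal)) ∧
    (∃ u, F u < F v ∧ ∃ W : G.Walk v u,
      ∀ x ∈ W.support, (F x : EReal) ≤ deathValue G F v) := by
  set T : Set ℝ := {s | ∃ u, F u < F v ∧ sublevelReach G F s v u} with hT
  -- every walk to a smaller vertex gives an element of T which is a max F over the walk
  have key : ∀ u, F u < F v → ∀ W : G.Walk v u,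
      ∃ x ∈ W.support, F x ∈ T ∧ ∀ y ∈ W.support, F y ≤ F x := by
    intro u hu W
    obtain ⟨x, hxmem, hxmax⟩ := W.support.toFinset.exists_max_image F
      ⟨v, List.mem_toFinset.mpr W.start_mem_support⟩
    rw [List.mem_toFinset] at hxmem
    have hxmax' : ∀ y ∈ W.support, F y ≤ F x := fun y hy =>
      hxmax y (List.mem_toFinset.mpr hy)
    exact ⟨x, hxmem, ⟨u, hu, (sublevelReach_iff G F (F x) v u).mpr ⟨W, hxmax'⟩⟩, hxmax'⟩
  -- T ∩ range F is finite nonempty, take min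
  have hfin : (Set.range F ∩ T).Finite := (Set.finite_range F).inter_of_left T
  have hne : (Set.range F ∩ T).Nonempty := by
    obtain ⟨u, hu, hr⟩ := hreach
    obtain ⟨W⟩ := hr
    obtain ⟨x, _, hxT, _⟩ := key u hu W
    exact ⟨F x, ⟨x, rfl⟩, hxT⟩
  obtain ⟨d₀, hd₀mem, hd₀min⟩ := Set.exists_min_image _ id hfin hne
  -- d₀ is a lower bound for T
  have hlb : ∀ s ∈ T, d₀ ≤ s := by
    rintro s ⟨u, hu, hr⟩
    obtain ⟨W, hW⟩ := (sublevelReach_iff G F s v u).mp hr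
    obtain ⟨x, hxmem, hxT, _⟩ := key u hu W
    exact le_trans (hd₀min (F x) ⟨⟨x, rfl⟩, hxT⟩) (hW x hxmem)
  have hdv : deathValue G F v = (d₀ : EReal) := by
    apply le_antisymm
    · exact sInf_le ⟨d₀, rfl, hd₀mem.2⟩
    · apply le_sInf
      rintro t ⟨s, rfl, hs⟩
      exact_mod_cast hlb s hs
  refine ⟨by simp [hdv], ?_, ?_⟩
  · intro u hu W
    obtain ⟨x, hxmem, hxT, _⟩ := key u hu W
    refine ⟨x, hxmem, ?_⟩
    rw [hdv]
    exact_mod_cast hlb (F x) hxT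
  · obtain ⟨u, hu, hr⟩ := hd₀mem.2
    obtain ⟨W, hW⟩ := (sublevelReach_iff G F d₀ v u).mp hr
    refine ⟨u, hu, W, fun x hx => ?_⟩
    rw [hdv]
    exact_mod_cast hW x hx

end
end
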